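/- Let B be a balanced bipartite graph with parts V1, V2 of size n each and minimum degree at least n/2 + 1. If S is a subset of vertices with |S| = n + 1 such that B[S] is a forest, then min(|S ∩ V1|, |S ∩ V2|) ∈ {1, 2, n/2}. -/

import Mathlib

open Finset SimpleGraph

namespace ForestAux

open SimpleGraph Walk

variable {V : Type} [Fintype V] [DecidableEq V]

lemma path_ne {G : SimpleGraph V} {u v : V} {p : G.Walk u v} (hp : p.IsPath)
    (hn : ¬ p.Nil) : u ≠ v := by
  rintro rfl
  have h0 : (⟨p, hp⟩ : G.Path u u) = SimpleGraph.Path.nil := SimpleGraph.Path.loop_eq _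
  have h1 : p = Walk.nil := congrArg Subtype.val h0
  rw [h1] at hn
  exact hn Walk.nil_nil

lemma card_edgeFinset_lt_card {G : SimpleGraph V} [DecidableRel G.Adj]
    (h : G.IsAcyclic) [Nonempty V] :
    G.edgeFinset.card + 1 ≤ Fintype.card V := by
  classical
  let r : V → V := fun v => Quot.out (G.connectedComponentMk v)
  have hmk : ∀ v, G.connectedComponentMk (r v) = G.connectedComponentMk v := fun v =>
    Quot.out_eq _
  have hreach : ∀ v, G.Reachable v (r v) := fun v =>
    (ConnectedComponent.eq.mp (hmk v)).symm
  have hrr : ∀ v, r (r v) = r v := fun v => congrArg Quot.out (hmk v)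
  have hradj : ∀ {x y}, G.Adj x y → r x = r y := fun hxy =>
    congrArg Quot.out (ConnectedComponent.sound hxy.reachable)
  have hep : ∀ v, ∃! p : G.Walk v (r v), p.IsPath := by
    intro v
    refine ⟨((hreach v).some.toPath : G.Path _ _).1, ((hreach v).some.toPath).2, ?_⟩
    intro q hq
    exact congrArg Subtype.val (h.path_unique ⟨q, hq⟩ (hreach v).some.toPath)
  choose f hf hf' using hep
  let g : V → Sym2 V := fun w =>
    if hw : w = r w then s(w, w) else ((f w).firstDart (not_nil_of_ne hw)).edge
  let T : Finset V := Finset.univ.filter (fun w => w ≠ r w)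
  have hsub : G.edgeFinset ⊆ T.image g := by
    have key : ∀ x y, G.Adj x y → (f x).length ≤ (f y).length → s(x, y) ∈ T.image g := by
      intro x y hxy h'
      have hrxy : r x = r y := hradj hxy
      have hyx : y ∉ (f x).support := by
        intro hy
        have ht : (f x).takeUntil y hy = Walk.cons hxy Walk.nil := by
          have h1 : ((f x).takeUntil y hy).IsPath := (hf x).takeUntil hy
          have h2 : (Walk.cons hxy Walk.nil).IsPath := by simp [hxy.ne]
          exact congrArg Subtype.val (h.path_unique ⟨_, h1⟩ ⟨_, h2⟩)
        have hdp : ((f x).dropUntil y hy).copy rfl hrxy = f y :=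
          hf' y _ ((isPath_copy _ rfl hrxy).2 ((hf x).dropUntil hy))
        have hlen := congrArg Walk.length ((f x).take_spec hy)
        rw [Walk.length_append, ht] at hlen
        have hlen2 : ((f x).dropUntil y hy).length = (f y).length := by
          rw [← hdp, Walk.length_copy]
        simp only [Walk.length_cons, Walk.length_nil] at hlen
        omega
      have hfy : f y = Walk.cons hxy.symm ((f x).copy rfl hrxy) := by
        refine (hf' y _ ?_).symm
        show (Walk.cons hxy.symm ((f x).copy rfl hrxy)).IsPath
        rw [Walk.cons_isPath_iff]
        exact ⟨(isPath_copy _ rfl hrxy).2 (hf x), by rwa [Walk.support_copy]⟩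
      have hyr : y ≠ r y := by
        refine path_ne (hf y) ?_
        rw [hfy]
        exact Walk.not_nil_cons
      refine Finset.mem_image.2 ⟨y, ?_, ?_⟩
      · simp [T, hyr]
      · show (if hw : y = r y then s(y, y) else ((f y).firstDart (not_nil_of_ne hw)).edge) = s(x, y)
        rw [dif_neg hyr, Walk.edge_firstDart, hfy]
        simp [Sym2.eq_swap]
    intro e he
    revert he
    refine Sym2.ind ?_ e
    intro x y he
    rw [mem_edgeFinset, SimpleGraph.mem_edgeSet] at he
    rcases le_total (f x).length (f y).length with h' | h'
    · exact key x y he h'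
    · rw [Sym2.eq_swap]; exact key y x he.symm h'
  have hT' : T.card + 1 ≤ Fintype.card V := by
    obtain ⟨v0⟩ := ‹Nonempty V›
    have hsub2 : T ⊆ Finset.univ.erase (r v0) := by
      intro w hw
      rw [Finset.mem_erase]
      refine ⟨?_, Finset.mem_univ _⟩
      rintro rfl
      rw [Finset.mem_filter] at hw
      exact hw.2 (hrr v0).symm
    have h2 := Finset.card_le_card hsub2
    rw [Finset.card_erase_of_mem (Finset.mem_univ _), Finset.card_univ] at h2
    have hpos : 0 < Fintype.card V := Fintype.card_pos
    omega
  calc G.edgeFinset.card + 1 ≤ (T.image g).card + 1 :=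
        Nat.add_le_add_right (Finset.card_le_card hsub) 1
    _ ≤ T.card + 1 := Nat.add_le_add_right Finset.card_image_le 1
    _ ≤ Fintype.card V := hT'

end ForestAux


lemma arithAux (n a b Sg : ℕ) (hab : a + b = n + 1) (hbN : b ≤ n)
    (hSg : 2 * Sg ≤ 2 * n) (hsum : a * (n + 2) ≤ 2 * Sg + 2 * a * (n - b))
    (hSg2 : 2 * a = n + 1 → 2 * a ≤ Sg)
    (ha3 : 3 ≤ a) (hmin : a ≤ b) (hne : 2 * a ≠ n) : False := by
  rcases Nat.lt_or_ge (2 * a) n with hlt | hge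
  · -- 2a < n
    have hc : n - b = a - 1 := by omega
    rw [hc] at hsum
    obtain ⟨k, rfl⟩ : ∃ k, a = k + 3 := ⟨a - 3, by omega⟩
    obtain ⟨m, rfl⟩ : ∃ m, n = 2 * k + 7 + m := ⟨n - (2 * k + 7), by omega⟩
    have hE : k + 3 - 1 = k + 2 := by omega
    rw [hE] at hsum
    nlinarith [hsum, hSg]
  · -- 2a ≥ n, and ≠ n, and 2a ≤ a + b = n+1
    have h2a : 2 * a = n + 1 := by omega
    have := hSg2 h2a
    omega

theorem stmt4 {V : Type} [Fintype V] [DecidableEq V] (G : SimpleGraph V)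
    [DecidableRel G.Adj] (n : ℕ) (V1 V2 : Finset V)
    (hdisj : Disjoint V1 V2) (hunion : V1 ∪ V2 = Finset.univ)
    (hc1 : V1.card = n) (hc2 : V2.card = n)
    (hbip : ∀ u v, G.Adj u v → (u ∈ V1 ∧ v ∈ V2) ∨ (u ∈ V2 ∧ v ∈ V1))
    (hdeg : ∀ v, n + 2 ≤ 2 * G.degree v)
    (S : Finset V) (hS : S.card = n + 1)
    (hforest : (G.induce (S : Set V)).IsAcyclic) :
    min (S ∩ V1).card (S ∩ V2).card = 1 ∨
      min (S ∩ V1).card (S ∩ V2).card = 2 ∨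
      2 * min (S ∩ V1).card (S ∩ V2).card = n := by
  classical
  set A := S ∩ V1 with hA
  set B := S ∩ V2 with hB
  have hnot12 : ∀ w, w ∈ V1 → w ∈ V2 → False := fun w h1 h2 =>
    Finset.disjoint_left.mp hdisj h1 h2
  have hSsplit : A ∪ B = S := by
    rw [hA, hB, ← Finset.inter_union_distrib_left, hunion, Finset.inter_univ]
  have hdisjAB : Disjoint A B :=
    hdisj.mono Finset.inter_subset_right Finset.inter_subset_right
  have hab : A.card + B.card = n + 1 := by
    rw [← Finset.card_union_of_disjoint hdisjAB, hSsplit, hS]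
  have haN : A.card ≤ n := hc1 ▸ Finset.card_le_card Finset.inter_subset_right
  have hbN : B.card ≤ n := hc2 ▸ Finset.card_le_card Finset.inter_subset_right
  -- the induced graph
  haveI : DecidableRel (G.induce (S : Set V)).Adj :=
    fun u v => inferInstanceAs (Decidable (G.Adj u.1 v.1))
  have hcard : Fintype.card ↥(S : Set V) = n + 1 := by
    simp [hS]
  haveI hne : Nonempty ↥(S : Set V) := by
    rw [← Fintype.card_pos_iff, hcard]; omega
  -- degree in the induced graph
  have hdegH : ∀ x : ↥(S : Set V),
      (G.induce (S : Set V)).degree x = ((G.neighborFinset x.1) ∩ S).card := by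
    intro x
    show ((G.induce (S : Set V)).neighborFinset x).card = _
    refine Finset.card_bij (fun y _ => y.1) ?_ ?_ ?_
    · intro y hy
      rw [SimpleGraph.mem_neighborFinset] at hy
      have hadj : G.Adj x.1 y.1 := hy
      rw [Finset.mem_inter, SimpleGraph.mem_neighborFinset]
      exact ⟨hadj, by exact_mod_cast y.2⟩
    · intro y1 _ y2 _ hh
      exact Subtype.ext hh
    · intro z hz
      rw [Finset.mem_inter, SimpleGraph.mem_neighborFinset] at hz
      exact ⟨⟨z, by exact_mod_cast hz.2⟩, by
        rw [SimpleGraph.mem_neighborFinset]; exact hz.1, rfl⟩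
  -- handshake and forest edge bound
  have hhand := SimpleGraph.sum_degrees_eq_twice_card_edges (G.induce (S : Set V))
  have hEb := ForestAux.card_edgeFinset_lt_card hforest
  rw [hcard] at hEb
  have hsumS : ∑ v ∈ S, ((G.neighborFinset v) ∩ S).card ≤ 2 * n := by
    have h1 : ∑ v ∈ S, ((G.neighborFinset v) ∩ S).card
        = ∑ x : ↥(S : Set V), ((G.neighborFinset x.1) ∩ S).card :=
      Finset.sum_subtype S (fun x => Iff.symm Finset.mem_coe) _
    rw [h1]
    calc ∑ x : ↥(S : Set V), ((G.neighborFinset x.1) ∩ S).card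
        = ∑ x : ↥(S : Set V), (G.induce (S : Set V)).degree x :=
          (Finset.sum_congr rfl fun x _ => (hdegH x).symm)
      _ = 2 * (G.induce (S : Set V)).edgeFinset.card := hhand
      _ ≤ 2 * n := by omega
  -- per-vertex degree bounds
  have hside : ∀ (W1 W2 : Finset V), W1 ∪ W2 = Finset.univ → W2.card = n →
      (∀ w, w ∈ W1 → w ∈ W2 → False) →
      (∀ u v, G.Adj u v → (u ∈ W1 ∧ v ∈ W2) ∨ (u ∈ W2 ∧ v ∈ W1)) → ∀ v ∈ S ∩ W1,
      n + 2 ≤ 2 * ((G.neighborFinset v ∩ S).card) + 2 * (n - (S ∩ W2).card) := by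
    intro W1 W2 hun hcW hdj hbipW v hv
    rw [Finset.mem_inter] at hv
    have hnsub : G.neighborFinset v ⊆ (G.neighborFinset v ∩ S) ∪ (W2 \ (S ∩ W2)) := by
      intro u hu
      have hadj : G.Adj v u := (SimpleGraph.mem_neighborFinset _ _ _).mp hu
      have hu2 : u ∈ W2 := by
        rcases hbipW v u hadj with ⟨_, h⟩ | ⟨hv2, _⟩
        · exact h
        · exact absurd hv2 (fun hc => hdj v hv.2 hc)
      by_cases huS : u ∈ S
      · exact Finset.mem_union_left _ (Finset.mem_inter.mpr ⟨hu, huS⟩)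
      · exact Finset.mem_union_right _ (Finset.mem_sdiff.mpr ⟨hu2, fun hc =>
          huS (Finset.mem_inter.mp hc).1⟩)
    have hcsd : (W2 \ (S ∩ W2)).card = n - (S ∩ W2).card := by
      rw [Finset.card_sdiff_of_subset Finset.inter_subset_right, hcW]
    have hdle : G.degree v ≤ (G.neighborFinset v ∩ S).card + (n - (S ∩ W2).card) := by
      calc G.degree v = (G.neighborFinset v).card := rfl
        _ ≤ ((G.neighborFinset v ∩ S) ∪ (W2 \ (S ∩ W2))).card := Finset.card_le_card hnsub
        _ ≤ (G.neighborFinset v ∩ S).card + (W2 \ (S ∩ W2)).card := Finset.card_union_le _ _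
        _ = _ := by rw [hcsd]
    have := hdeg v
    omega
  have hside1 := hside V1 V2 hunion hc2 hnot12 hbip
  have hside2 := hside V2 V1 (by rw [Finset.union_comm]; exact hunion) hc1
      (fun w h2 h1 => hnot12 w h1 h2) (fun u v h => (hbip u v h).symm)
  -- double counting
  have hDrestrict : ∀ (W1 W2 : Finset V),
      (∀ w, w ∈ W1 → w ∈ W2 → False) →
      (∀ u v, G.Adj u v → (u ∈ W1 ∧ v ∈ W2) ∨ (u ∈ W2 ∧ v ∈ W1)) →
      ∀ v ∈ S ∩ W1, G.neighborFinset v ∩ S = (S ∩ W2).filter (fun u => G.Adj v u) := by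
    intro W1 W2 hdj hbipW v hv
    rw [Finset.mem_inter] at hv
    ext u
    simp only [Finset.mem_inter, SimpleGraph.mem_neighborFinset, Finset.mem_filter]
    constructor
    · rintro ⟨hadj, huS⟩
      have hu2 : u ∈ W2 := by
        rcases hbipW v u hadj with ⟨_, h⟩ | ⟨hv2, _⟩
        · exact h
        · exact absurd hv2 (fun hc => hdj v hv.2 hc)
      exact ⟨⟨huS, hu2⟩, hadj⟩
    · rintro ⟨⟨huS, _⟩, hadj⟩
      exact ⟨hadj, huS⟩
  have hSgEq : ∑ v ∈ A, (G.neighborFinset v ∩ S).card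
      = ∑ v ∈ B, (G.neighborFinset v ∩ S).card := by
    have e1 : ∑ v ∈ A, (G.neighborFinset v ∩ S).card
        = ∑ v ∈ A, ((S ∩ V2).filter (fun u => G.Adj v u)).card :=
      Finset.sum_congr rfl (fun v hv => by rw [hDrestrict V1 V2 hnot12 hbip v hv])
    have e2 : ∑ v ∈ B, (G.neighborFinset v ∩ S).card
        = ∑ v ∈ B, ((S ∩ V1).filter (fun u => G.Adj v u)).card :=
      Finset.sum_congr rfl (fun v hv => by
        rw [hDrestrict V2 V1 (fun w h2 h1 => hnot12 w h1 h2)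
          (fun u v h => (hbip u v h).symm) v hv])
    rw [e1, e2]
    simp only [Finset.card_filter]
    rw [Finset.sum_comm]
    exact Finset.sum_congr rfl fun u _ => Finset.sum_congr rfl fun v _ =>
      if_congr (G.adj_comm v u) rfl rfl
  have hsplit : ∑ v ∈ A, (G.neighborFinset v ∩ S).card
      + ∑ v ∈ B, (G.neighborFinset v ∩ S).card
      = ∑ v ∈ S, (G.neighborFinset v ∩ S).card := by
    rw [← Finset.sum_union hdisjAB, hSsplit]
  set Sg := ∑ v ∈ A, (G.neighborFinset v ∩ S).card with hSgdef
  have hSgn : 2 * Sg ≤ 2 * n := by omega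
  have hsumA : A.card * (n + 2) ≤ 2 * Sg + 2 * A.card * (n - B.card) := by
    calc A.card * (n + 2) = ∑ _v ∈ A, (n + 2) := by rw [Finset.sum_const, smul_eq_mul]
      _ ≤ ∑ v ∈ A, (2 * ((G.neighborFinset v ∩ S).card) + 2 * (n - B.card)) :=
          Finset.sum_le_sum (fun v hv => hside1 v hv)
      _ = 2 * Sg + 2 * A.card * (n - B.card) := by
          rw [Finset.sum_add_distrib, ← Finset.mul_sum, Finset.sum_const, smul_eq_mul]
          ring
  have hsumB : B.card * (n + 2) ≤ 2 * Sg + 2 * B.card * (n - A.card) := by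
    rw [hSgEq]
    calc B.card * (n + 2) = ∑ _v ∈ B, (n + 2) := by rw [Finset.sum_const, smul_eq_mul]
      _ ≤ ∑ v ∈ B, (2 * ((G.neighborFinset v ∩ S).card) + 2 * (n - A.card)) :=
          Finset.sum_le_sum (fun v hv => hside2 v hv)
      _ = 2 * (∑ v ∈ B, (G.neighborFinset v ∩ S).card) + 2 * B.card * (n - A.card) := by
          rw [Finset.sum_add_distrib, ← Finset.mul_sum, Finset.sum_const, smul_eq_mul]
          ring
  have hbal : 2 * A.card = n + 1 → 2 * A.card ≤ Sg := by
    intro hb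
    have h2 : ∀ v ∈ A, 2 ≤ (G.neighborFinset v ∩ S).card := by
      intro v hv
      have h := hside1 v hv
      rw [← hB] at h
      omega
    calc 2 * A.card = ∑ _v ∈ A, 2 := by rw [Finset.sum_const, smul_eq_mul]; ring
      _ ≤ Sg := Finset.sum_le_sum h2
  have hbalB : 2 * B.card = n + 1 → 2 * B.card ≤ Sg := by
    intro hb
    have h2 : ∀ v ∈ B, 2 ≤ (G.neighborFinset v ∩ S).card := by
      intro v hv
      have h := hside2 v hv
      rw [← hA] at h
      omega
    rw [hSgEq]
    calc 2 * B.card = ∑ _v ∈ B, 2 := by rw [Finset.sum_const, smul_eq_mul]; ring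
      _ ≤ _ := Finset.sum_le_sum h2
  by_contra hcon
  push_neg at hcon
  obtain ⟨hm1, hm2, hm3⟩ := hcon
  have ha1 : 1 ≤ A.card := by
    rcases Nat.eq_zero_or_pos A.card with h0 | h0
    · omega
    · exact h0
  have hb1 : 1 ≤ B.card := by
    rcases Nat.eq_zero_or_pos B.card with h0 | h0
    · omega
    · exact h0
  rcases le_total A.card B.card with hle | hle
  · rw [min_eq_left hle] at hm1 hm2 hm3
    exact arithAux n A.card B.card Sg hab hbN hSgn hsumA hbal (by omega) hle hm3
  · rw [min_eq_right hle] at hm1 hm2 hm3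
    exact arithAux n B.card A.card Sg (by omega) haN hSgn hsumB hbalB (by omega) hle hm3
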